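/- Let f : ZMod 6 → Fin 3 have each color occurring exactly twice, and suppose the positions can be partitioned into three cyclically contiguous blocks of two positions each, one block containing both occurrences of r and each of the other two blocks containing one occurrence of b and one occurrence of p. Then f does not satisfy the P3-constraint. -/
import Mathlib


namespace SATR

def red : Fin 3 := 0
def blue : Fin 3 := 1
def purple : Fin 3 := 2

/-- `x` lies strictly inside the cyclic arc from `a` to `c` (in the `+1` direction). -/
def arcBetween {n : ℕ} [NeZero n] (a x c : ZMod n) : Prop :=
  0 < (x - a).val ∧ (x - a).val < (c - a).val

/-- Colors `c` and `c'` alternate in the cyclic word `f`: there are two positions of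
color `c` such that each of the two open cyclic arcs they determine contains a
position of color `c'`. -/
def Alternates {n : ℕ} [NeZero n] (f : ZMod n → Fin 3) (c c' : Fin 3) : Prop :=
  ∃ i1 i2 j1 j2 : ZMod n, f i1 = c ∧ f i2 = c ∧ i1 ≠ i2 ∧
    f j1 = c' ∧ f j2 = c' ∧ arcBetween i1 j1 i2 ∧ arcBetween i2 j2 i1

/-- The K3-constraint: all three pairs of distinct colors alternate. -/
def K3Constraint (w : ZMod 6 → Fin 3) : Prop :=
  Alternates w red blue ∧ Alternates w red purple ∧ Alternates w blue purple

/-- The P3-constraint: r–p and b–p alternate, r–b do not. -/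
def P3Constraint (w : ZMod 6 → Fin 3) : Prop :=
  Alternates w red purple ∧ Alternates w blue purple ∧ ¬ Alternates w red blue

/-- Number of occurrences of color `c` in the cyclic word `f`. -/
def count {n : ℕ} [NeZero n] (f : ZMod n → Fin 3) (c : Fin 3) : ℕ :=
  (Finset.univ.filter fun i => f i = c).card

/-- Insert a new element of color `c` into the gap right after position `g`. -/
def insertAt {n : ℕ} [NeZero n] (f : ZMod n → Fin 3) (g : ZMod n) (c : Fin 3) :
    ZMod (n + 1) → Fin 3 :=
  fun j =>
    if j.val = g.val + 1 then c
    else if j.val ≤ g.val then f (j.val : ZMod n)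
    else f ((j.val - 1 : ℕ) : ZMod n)

/-- Insert `c1` right after position `g`, and `c2` immediately (cyclically) after `c1`,
so the two new elements are cyclically consecutive. -/
def insertPair {n : ℕ} [NeZero n] (f : ZMod n → Fin 3) (g : ZMod n) (c1 c2 : Fin 3) :
    ZMod (n + 2) → Fin 3 :=
  insertAt (insertAt f g c1) ((g.val + 1 : ℕ) : ZMod (n + 1)) c2

/-- The cyclic distance between two positions: the minimum of the two arc lengths. -/
def cycDist {n : ℕ} [NeZero n] (i j : ZMod n) : ℕ :=
  min (j - i).val (i - j).val

/-- If a length-6 cyclic word with each color occurring exactly twice splits into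
three cyclically contiguous blocks of two positions, one block holding both reds
and each of the other two blocks holding one blue and one purple, then the
P3-constraint fails. -/
theorem p3_fails_for_222_split_with_red_block
    (f : ZMod 6 → Fin 3) (h : ∀ c : Fin 3, count f c = 2) (i : ZMod 6)
    (hr1 : f i = red) (hr2 : f (i + 1) = red)
    (hblock1 : (f (i + 2) = blue ∧ f (i + 3) = purple) ∨
               (f (i + 2) = purple ∧ f (i + 3) = blue))
    (hblock2 : (f (i + 4) = blue ∧ f (i + 5) = purple) ∨
               (f (i + 4) = purple ∧ f (i + 5) = blue)) :
    ¬ P3Constraint f := by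
  rintro ⟨⟨i1, i2, j1, j2, h1, h2, h12, hj1, hj2, ha1, ha2⟩, _, _⟩
  have hne : i ≠ i + 1 := by
    intro hh
    have : (0 : ZMod 6) = 1 := by
      have := congrArg (fun x => x - i) hh
      simpa using this
    exact absurd this (by decide)
  have hset : (Finset.univ.filter fun j => f j = red) = {i, i + 1} := by
    apply Finset.eq_of_superset_of_card_ge
    · intro x hx
      simp only [Finset.mem_insert, Finset.mem_singleton] at hx
      rcases hx with rfl | rfl <;> simp [hr1, hr2]
    · have := h red
      rw [count] at this
      rw [this, Finset.card_insert_of_notMem (by simpa using hne),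
        Finset.card_singleton]
  have hmem : ∀ x : ZMod 6, f x = red → x = i ∨ x = i + 1 := by
    intro x hx
    have : x ∈ (Finset.univ.filter fun j => f j = red) := by simp [hx]
    rw [hset] at this
    simpa using this
  have hone : ((i + 1 - i : ZMod 6)).val = 1 := by
    simp
    rfl
  rcases hmem i1 h1 with rfl | rfl <;> rcases hmem i2 h2 with rfl | rfl
  · exact h12 rfl
  · rcases ha1 with ⟨hp, hq⟩
    rw [hone] at hq
    omega
  · rcases ha2 with ⟨hp, hq⟩
    rw [hone] at hq
    omega
  · exact h12 rfl

end SATR
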